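/- Let 𝔠 denote the Cantor set, A an index set, P a proper closed subset of 𝔠^A, and f a self-homeomorphism of P. Suppose there exist a proper subset B ⊊ A and a self-homeomorphism f_B of P_B = π_B(P) such that: P = P_B × 𝔠^{A∖B} (under the identification 𝔠^A = 𝔠^B × 𝔠^{A∖B}); f_B ∘ π_B = π_B ∘ f on P; and f_B can be extended to a homeomorphism in H(𝔠^B). Then f can be extended to a homeomorphism in H(𝔠^A). -/

import Mathlib

universe u v

open Set

/-- The projection of the product `∀ i, X i` onto the partial product indexed by `B`. -/
def proj {I : Type u} {X : I → Type v} (B : Set I) (x : ∀ i, X i) : ∀ b : B, X b :=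
  fun b => x b

namespace Stmt12Aux

variable {X : Type*} [TopologicalSpace X]

/-- Disjoint compact sets in a compact Hausdorff totally disconnected space are
separated by a clopen set. -/
theorem clopen_sep [CompactSpace X] [T2Space X] [TotallyDisconnectedSpace X]
    {K L : Set X} (hK : IsCompact K) (hL : IsCompact L) (hd : Disjoint K L) :
    ∃ U, IsClopen U ∧ K ⊆ U ∧ Disjoint U L := by
  classical
  have step1 : ∀ x ∈ K, ∃ V, IsClopen V ∧ x ∈ V ∧ Disjoint V L := by
    intro x hx
    have hxy : ∀ y : L, ∃ U : Set X, IsClopen U ∧ x ∈ U ∧ (y : X) ∈ Uᶜ := by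
      intro y
      have hne : x ≠ (y : X) := by
        rintro rfl
        exact (disjoint_left.mp hd hx) y.2
      exact exists_isClopen_of_totally_separated hne
    choose U hU hxU hyU using hxy
    have hcov : L ⊆ ⋃ y : L, (U y)ᶜ := fun y hy => mem_iUnion.mpr ⟨⟨y, hy⟩, hyU ⟨y, hy⟩⟩
    obtain ⟨t, ht⟩ := hL.elim_finite_subcover (fun y : L => (U y)ᶜ)
      (fun y => (hU y).compl.isOpen) hcov
    refine ⟨⋂ y ∈ t, U y, isClopen_biInter_finset fun y _ => hU y,
      mem_iInter₂.mpr fun y _ => hxU y, ?_⟩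
    rw [disjoint_left]
    intro z hz hzL
    rcases mem_iUnion₂.mp (ht hzL) with ⟨y, hyt, hy⟩
    exact hy (mem_iInter₂.mp hz y hyt)
  choose V hV hxV hVL using step1
  have hcov : K ⊆ ⋃ x : K, V x x.2 := fun x hx => mem_iUnion.mpr ⟨⟨x, hx⟩, hxV x hx⟩
  obtain ⟨s, hs⟩ := hK.elim_finite_subcover (fun x : K => V x x.2)
    (fun x => (hV x x.2).isOpen) hcov
  refine ⟨⋃ x ∈ s, V x x.2, isClopen_biUnion_finset fun x _ => hV x x.2, hs, ?_⟩
  rw [disjoint_left]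
  intro z hz hzL
  rcases mem_iUnion₂.mp hz with ⟨x, hxs, hxz⟩
  exact (disjoint_left.mp (hVL x x.2)) hxz hzL

/-- Pairwise disjoint clopen envelopes around finitely many pairwise disjoint compacta. -/
theorem clopen_envelopes {ι : Type*} [CompactSpace X] [T2Space X] [TotallyDisconnectedSpace X]
    [Finite ι] (E : ι → Set X) (hE : ∀ i, IsCompact (E i))
    (hdis : Pairwise (Function.onFun Disjoint E)) :
    ∃ U : ι → Set X, (∀ i, IsClopen (U i)) ∧ (∀ i, E i ⊆ U i) ∧
      Pairwise (Function.onFun Disjoint U) := by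
  classical
  cases nonempty_fintype ι
  have h1 : ∀ i : ι, ∃ W, IsClopen W ∧ E i ⊆ W ∧
      Disjoint W (⋃ j ∈ Finset.univ.erase i, E j) := by
    intro i
    refine clopen_sep (hE i) ((Finset.univ.erase i).finite_toSet.isCompact_biUnion
      fun j _ => hE j) ?_
    rw [disjoint_iUnion₂_right]
    intro j hj
    exact hdis (fun h => (Finset.mem_erase.mp hj).1 h.symm)
  choose W hW hEW hWd using h1
  refine ⟨fun i => W i ∩ ⋂ j ∈ Finset.univ.erase i, (W j)ᶜ, ?_, ?_, ?_⟩
  · intro i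
    exact (hW i).inter (isClopen_biInter_finset fun j _ => (hW j).compl)
  · intro i x hx
    refine ⟨hEW i hx, mem_iInter₂.mpr fun j hj => ?_⟩
    intro hxW
    exact (disjoint_left.mp (hWd j)) hxW
      (mem_iUnion₂.mpr ⟨i, Finset.mem_erase.mpr ⟨fun h => (Finset.mem_erase.mp hj).1 h.symm,
        Finset.mem_univ i⟩, hx⟩)
  · intro i j hij
    rw [Function.onFun, disjoint_left]
    rintro x ⟨hxi, hxi'⟩ ⟨hxj, -⟩
    exact mem_iInter₂.mp hxi' j (Finset.mem_erase.mpr ⟨hij.symm, Finset.mem_univ j⟩) hxj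

/-- A continuous `Bool`-valued map on a closed subset of a compact Hausdorff totally
disconnected space extends continuously. -/
theorem bool_extend [CompactSpace X] [T2Space X] [TotallyDisconnectedSpace X]
    {s : Set X} (hs : IsClosed s) (g : X → Bool) (hg : ContinuousOn g s) :
    ∃ G : X → Bool, Continuous G ∧ ∀ x ∈ s, G x = g x := by
  classical
  have hsc : IsCompact s := hs.isCompact
  have h1 : IsCompact (s ∩ g ⁻¹' {true}) := by
    have : s ∩ g ⁻¹' {true} = Subtype.val '' ((s.restrict g) ⁻¹' {true}) := by
      ext x
      simp only [mem_inter_iff, mem_image, mem_preimage, restrict_apply, Subtype.exists,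
        exists_and_right, exists_eq_right, mem_singleton_iff]
      tauto
    rw [this]
    have : CompactSpace s := isCompact_iff_compactSpace.mp hsc
    exact ((IsClosed.preimage (continuousOn_iff_continuous_restrict.mp hg)
      (isClosed_discrete _)).isCompact).image continuous_subtype_val
  have h2 : IsCompact (s ∩ g ⁻¹' {false}) := by
    have : s ∩ g ⁻¹' {false} = Subtype.val '' ((s.restrict g) ⁻¹' {false}) := by
      ext x
      simp only [mem_inter_iff, mem_image, mem_preimage, restrict_apply, Subtype.exists,
        exists_and_right, exists_eq_right, mem_singleton_iff]
      tauto
    rw [this]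
    have : CompactSpace s := isCompact_iff_compactSpace.mp hsc
    exact ((IsClosed.preimage (continuousOn_iff_continuous_restrict.mp hg)
      (isClosed_discrete _)).isCompact).image continuous_subtype_val
  have hdis : Disjoint (s ∩ g ⁻¹' {true}) (s ∩ g ⁻¹' {false}) := by
    rw [disjoint_left]
    rintro x ⟨-, hx1⟩ ⟨-, hx2⟩
    simp only [mem_preimage, mem_singleton_iff] at hx1 hx2
    rw [hx1] at hx2; exact Bool.noConfusion hx2
  obtain ⟨U, hU, hKU, hUd⟩ := clopen_sep h1 h2 hdis
  refine ⟨U.boolIndicator, (continuous_boolIndicator_iff_isClopen U).mpr hU, ?_⟩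
  intro x hx
  cases hgx : g x with
  | true =>
      have : x ∈ U := hKU ⟨hx, by simp [hgx]⟩
      simp [Set.boolIndicator, this]
  | false =>
      have : x ∉ U := fun hxU => (disjoint_left.mp hUd) hxU ⟨hx, by simp [hgx]⟩
      simp [Set.boolIndicator, this]

/-- A continuous Bool-valued function on `Y × (μ → Bool)` with `Y` compact depends on
finitely many of the `μ`-coordinates, uniformly in `Y`. -/
theorem finite_support {Y : Type*} [TopologicalSpace Y] [CompactSpace Y] {μ : Type*}
    (F : Y × (μ → Bool) → Bool) (hF : Continuous F) :
    ∃ D : Finset μ, ∀ (y : Y) (c c' : μ → Bool), (∀ j ∈ D, c j = c' j) →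
      F (y, c) = F (y, c') := by
  classical
  have key : ∀ p : Y × (μ → Bool), ∃ (V : Set Y) (I : Finset μ), IsOpen V ∧ p.1 ∈ V ∧
      (∀ q : Y × (μ → Bool), q.1 ∈ V → (∀ j ∈ I, q.2 j = p.2 j) → F q = F p) := by
    intro p
    have hmem : F ⁻¹' {F p} ∈ nhds p := (hF.isOpen_preimage _ (isOpen_discrete _)).mem_nhds rfl
    rw [nhds_prod_eq, Filter.mem_prod_iff] at hmem
    obtain ⟨V, hV, Wn, hWn, hVW⟩ := hmem
    rw [nhds_pi, Filter.mem_pi'] at hWn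
    obtain ⟨I, t, htn, htW⟩ := hWn
    refine ⟨interior V, I, isOpen_interior, mem_interior_iff_mem_nhds.mpr hV, ?_⟩
    rintro ⟨y, c⟩ hy hc
    have hcW : c ∈ Wn := by
      apply htW
      intro j hj
      have : c j = p.2 j := hc j hj
      change t j (c j)  -- no-op safeguard
      show c j ∈ t j
      rw [this]
      exact mem_of_mem_nhds (htn j)
    have : (y, c) ∈ F ⁻¹' {F p} := hVW ⟨interior_subset hy, hcW⟩
    exact this
  choose V I hVopen hVmem hVspec using key
  have hcov : (univ : Set (Y × (μ → Bool))) ⊆ ⋃ p, V p ×ˢ {c | ∀ j ∈ I p, c j = p.2 j} := by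
    intro p _
    refine mem_iUnion.mpr ⟨p, mem_prod.mpr ⟨hVmem p, ?_⟩⟩
    intro j _
    rfl
  have hopen : ∀ p : Y × (μ → Bool), IsOpen (V p ×ˢ {c : μ → Bool | ∀ j ∈ I p, c j = p.2 j}) := by
    intro p
    refine (hVopen p).prod ?_
    have : {c : μ → Bool | ∀ j ∈ I p, c j = p.2 j} = ⋂ j ∈ I p, (fun c : μ → Bool => c j) ⁻¹' {p.2 j} := by
      ext c; simp
    rw [this]
    exact isOpen_biInter_finset fun j _ => (continuous_apply j).isOpen_preimage _ (isOpen_discrete _)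
  obtain ⟨s, hs⟩ := isCompact_univ.elim_finite_subcover _ hopen hcov
  refine ⟨s.biUnion I, ?_⟩
  intro y c c' hagree
  rcases mem_iUnion₂.mp (hs (mem_univ (y, c))) with ⟨p, hps, hp⟩
  rw [mem_prod] at hp
  have h1 : F (y, c) = F p := hVspec p (y, c) hp.1 hp.2
  have h2 : F (y, c') = F p := by
    refine hVspec p (y, c') hp.1 ?_
    intro j hj
    show c' j = p.2 j
    rw [← hagree j (Finset.mem_biUnion.mpr ⟨p, hps, hj⟩)]
    exact hp.2 j hj
  rw [h1, h2]

end Stmt12Aux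

namespace Stmt12Aux

variable {μ : Type*}

/-- `u` acts only on the coordinates in `N` and depends only on them. -/
def NLoc (N : Set μ) (u : (μ → Bool) → μ → Bool) : Prop :=
  (∀ c j, j ∉ N → u c j = c j) ∧
    ∀ c c' j, j ∈ N → (∀ i ∈ N, c i = c' i) → u c j = u c' j

def GoodPair (N : Set μ) (q : ((μ → Bool) → μ → Bool) × ((μ → Bool) → μ → Bool)) : Prop :=
  Continuous q.1 ∧ Continuous q.2 ∧ NLoc N q.1 ∧ NLoc N q.2 ∧
    (∀ c, q.1 (q.2 c) = c) ∧ (∀ c, q.2 (q.1 c) = c)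

def LevMatch (S : Set μ) (q r : ((μ → Bool) → μ → Bool) × ((μ → Bool) → μ → Bool)) : Prop :=
  ∀ c, ∀ j ∈ S, q.1 c j = r.1 c j ∧ q.2 c j = r.2 c j

theorem LevMatch.mono {S T : Set μ} (hST : S ⊆ T) {a b} (h : LevMatch T a b) :
    LevMatch S a b := fun c j hj => h c j (hST hj)

theorem LevMatch.trans' {S : Set μ} {a b c} (h1 : LevMatch S a b) (h2 : LevMatch S b c) :
    LevMatch S a c := fun x j hj =>
  ⟨(h1 x j hj).1.trans (h2 x j hj).1, (h1 x j hj).2.trans (h2 x j hj).2⟩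

theorem LevMatch.refl' {S : Set μ} (a) : LevMatch S a a := fun _ _ _ => ⟨rfl, rfl⟩

theorem LevMatch.symm' {S : Set μ} {a b} (h : LevMatch S a b) : LevMatch S b a :=
  fun x j hj => ⟨(h x j hj).1.symm, (h x j hj).2.symm⟩

/-- finite support of a single continuous coordinate function -/
theorem finite_support' (u : (μ → Bool) → μ → Bool) (hu : Continuous u) (j : μ) :
    ∃ D : Finset μ, ∀ c c', (∀ i ∈ D, c i = c' i) → u c j = u c' j := by
  obtain ⟨D, hD⟩ := finite_support (Y := Unit) (fun p => u p.2 j)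
    (((continuous_apply j).comp hu).comp continuous_snd)
  exact ⟨D, fun c c' h => hD () c c' h⟩

/-- finite support inside `N` for an `N`-local map -/
theorem finite_support_N {N : Set μ} (u : (μ → Bool) → μ → Bool) (hu : Continuous u)
    (hloc : NLoc N u) {j : μ} (hj : j ∈ N) :
    ∃ D : Finset μ, (↑D ⊆ N) ∧ ∀ c c', (∀ i ∈ D, c i = c' i) → u c j = u c' j := by
  classical
  obtain ⟨D₀, hD₀⟩ := finite_support' u hu j
  refine ⟨D₀.filter (· ∈ N), by intro i hi; exact (Finset.mem_filter.mp hi).2, ?_⟩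
  intro c c' h
  set c'' : μ → Bool := fun i => if i ∈ N then c i else c' i with hc''
  have h1 : u c j = u c'' j := hloc.2 c c'' j hj (fun i hi => by simp [hc'', hi])
  have h2 : u c'' j = u c' j := by
    apply hD₀
    intro i hi
    by_cases hiN : i ∈ N
    · have := h i (Finset.mem_filter.mpr ⟨hi, hiN⟩)
      simp [hc'', hiN, this]
    · simp [hc'', hiN]
  rw [h1, h2]

variable {X : Type*} [TopologicalSpace X]

/-- continuity of evaluation of a pointwise locally constant family of continuous maps -/
theorem family_continuous {u : X → (μ → Bool) → μ → Bool}
    (hlc : ∀ x, ∃ O, IsOpen O ∧ x ∈ O ∧ ∀ y ∈ O, u y = u x)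
    (hc : ∀ x, Continuous (u x)) (j : μ) :
    Continuous fun p : X × (μ → Bool) => u p.1 p.2 j := by
  rw [continuous_iff_continuousAt]
  rintro ⟨x, c⟩
  obtain ⟨O, hO, hxO, hOeq⟩ := hlc x
  have h1 : ContinuousAt (fun p : X × (μ → Bool) => u x p.2 j) (x, c) :=
    ((continuous_apply j).comp ((hc x).comp continuous_snd)).continuousAt
  apply h1.congr
  have hmem : O ×ˢ (univ : Set (μ → Bool)) ∈ nhds (x, c) :=
    prod_mem_nhds (hO.mem_nhds hxO) Filter.univ_mem
  filter_upwards [hmem] with p hp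
  rw [mem_prod] at hp
  rw [hOeq p.1 hp.1]

variable [CompactSpace X] [T2Space X] [TotallyDisconnectedSpace X]

theorem cw_step {K : Set X} (hK : IsClosed K) {N : Set μ}
    (W W' : X → (μ → Bool) → μ → Bool)
    (hWc : Continuous fun p : X × (μ → Bool) => W p.1 p.2)
    (hW'c : Continuous fun p : X × (μ → Bool) => W' p.1 p.2)
    (hWloc : ∀ x, NLoc N (W x)) (hW'loc : ∀ x, NLoc N (W' x))
    (hinv : ∀ x ∈ K, (∀ c, W x (W' x c) = c) ∧ (∀ c, W' x (W x c) = c))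
    (Jb : Set μ) (hJb : Jb.Finite) (Js : Set μ)
    (φ : X → ((μ → Bool) → μ → Bool) × ((μ → Bool) → μ → Bool))
    (hlc : ∀ x, ∃ O, IsOpen O ∧ x ∈ O ∧ ∀ y ∈ O, φ y = φ x)
    (hgp : ∀ x, GoodPair N (φ x))
    (hkm : ∀ k ∈ K, LevMatch Js (φ k) (W k, W' k)) :
    ∃ ψ : X → ((μ → Bool) → μ → Bool) × ((μ → Bool) → μ → Bool),
      (∀ x, ∃ O, IsOpen O ∧ x ∈ O ∧ ∀ y ∈ O, ψ y = ψ x) ∧ (∀ x, GoodPair N (ψ x)) ∧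
      (∀ k ∈ K, LevMatch Jb (ψ k) (W k, W' k)) ∧ (∀ x, LevMatch Js (ψ x) (φ x)) := by
  classical
  set cls : X → Set X := fun k =>
    {y | (∀ c, ∀ j ∈ Jb, W y c j = W k c j ∧ W' y c j = W' k c j) ∧ φ y = φ k} with hcls
  have hfiber : ∀ v, IsClopen {y : X | φ y = v} := by
    intro v
    constructor
    · apply isOpen_compl_iff.mp
      rw [isOpen_iff_forall_mem_open]
      intro y hy
      obtain ⟨O, hO, hyO, hOeq⟩ := hlc y
      exact ⟨O, fun z hz => by
        simp only [mem_compl_iff, mem_setOf_eq] at hy ⊢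
        rw [hOeq z hz]; exact hy, hO, hyO⟩
    · rw [isOpen_iff_forall_mem_open]
      intro y hy
      obtain ⟨O, hO, hyO, hOeq⟩ := hlc y
      exact ⟨O, fun z hz => by
        simp only [mem_setOf_eq] at hy ⊢
        rw [hOeq z hz]; exact hy, hO, hyO⟩
  have hWcont : ∀ (k : X) (c : μ → Bool) (j : μ),
      Continuous fun y => W y c j := fun k c j =>
    (continuous_apply j).comp (hWc.comp (continuous_id.prodMk continuous_const))
  have hW'cont : ∀ (k : X) (c : μ → Bool) (j : μ),
      Continuous fun y => W' y c j := fun k c j =>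
    (continuous_apply j).comp (hW'c.comp (continuous_id.prodMk continuous_const))
  have hcls_closed : ∀ k, IsClosed (cls k) := by
    intro k
    have : cls k = (⋂ (c : μ → Bool), ⋂ j ∈ Jb,
        ({y | W y c j = W k c j} ∩ {y | W' y c j = W' k c j})) ∩ {y | φ y = φ k} := by
      ext y
      constructor
      · rintro ⟨h1, h2⟩
        exact ⟨mem_iInter.mpr fun c => mem_iInter₂.mpr fun j hj =>
          ⟨(h1 c j hj).1, (h1 c j hj).2⟩, h2⟩
      · rintro ⟨h1, h2⟩
        refine ⟨fun c j hj => ?_, h2⟩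
        have := mem_iInter₂.mp (mem_iInter.mp h1 c) j hj
        exact ⟨this.1, this.2⟩
    rw [this]
    refine IsClosed.inter (isClosed_iInter fun c => isClosed_biInter fun j hj =>
      (isClosed_eq (hWcont k c j) continuous_const).inter
        (isClosed_eq (hW'cont k c j) continuous_const)) (hfiber (φ k)).1
  have hcls_open : ∀ k, IsOpen (cls k) := by
    intro k
    set Bad : Set (X × (μ → Bool)) :=
      ⋃ j ∈ Jb, ({p : X × (μ → Bool) | W p.1 p.2 j ≠ W k p.2 j} ∪
        {p : X × (μ → Bool) | W' p.1 p.2 j ≠ W' k p.2 j}) with hBad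
    have hBadclosed : IsClosed Bad := by
      apply hJb.isClosed_biUnion
      intro j hj
      have e1 : IsClosed {p : X × (μ → Bool) | W p.1 p.2 j ≠ W k p.2 j} := by
        have : {p : X × (μ → Bool) | W p.1 p.2 j ≠ W k p.2 j} =
            (fun p : X × (μ → Bool) => (W p.1 p.2 j, W k p.2 j)) ⁻¹'
              {q : Bool × Bool | q.1 ≠ q.2} := rfl
        rw [this]
        exact (isClosed_discrete _).preimage
          (((continuous_apply j).comp hWc).prodMk
            ((continuous_apply j).comp (hWc.comp (continuous_const.prodMk continuous_snd))))
      have e2 : IsClosed {p : X × (μ → Bool) | W' p.1 p.2 j ≠ W' k p.2 j} := by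
        have : {p : X × (μ → Bool) | W' p.1 p.2 j ≠ W' k p.2 j} =
            (fun p : X × (μ → Bool) => (W' p.1 p.2 j, W' k p.2 j)) ⁻¹'
              {q : Bool × Bool | q.1 ≠ q.2} := rfl
        rw [this]
        exact (isClosed_discrete _).preimage
          (((continuous_apply j).comp hW'c).prodMk
            ((continuous_apply j).comp (hW'c.comp (continuous_const.prodMk continuous_snd))))
      exact e1.union e2
    have hproj : IsClosed (Prod.fst '' Bad) := isClosedMap_fst_of_compactSpace _ hBadclosed
    have hset : cls k = (Prod.fst '' Bad)ᶜ ∩ {y | φ y = φ k} := by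
      ext y
      simp only [hcls, mem_setOf_eq, mem_inter_iff, mem_compl_iff, mem_image, Prod.exists,
        not_exists]
      constructor
      · rintro ⟨h1, h2⟩
        refine ⟨?_, h2⟩
        rintro a c ⟨hmem, rfl⟩
        simp only [hBad, mem_iUnion, mem_union, mem_setOf_eq] at hmem
        obtain ⟨j, hj, hcase⟩ := hmem
        rcases hcase with hc | hc
        · exact hc (h1 c j hj).1
        · exact hc (h1 c j hj).2
      · rintro ⟨h1, h2⟩
        refine ⟨?_, h2⟩
        intro c j hj
        by_contra hcon
        push_neg at hcon
        apply h1 y c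
        refine ⟨?_, rfl⟩
        simp only [hBad, mem_iUnion, mem_union, mem_setOf_eq]
        rcases Decidable.em (W y c j = W k c j) with h | h
        · exact ⟨j, hj, Or.inr (hcon h)⟩
        · exact ⟨j, hj, Or.inl h⟩
    rw [hset]
    exact hproj.isOpen_compl.inter (hfiber (φ k)).2
  have hcls_self : ∀ k, k ∈ cls k := fun k => ⟨fun c j hj => ⟨rfl, rfl⟩, rfl⟩
  have hcls_mem_eq : ∀ k k', k' ∈ cls k → cls k' = cls k := by
    intro k k' hk'
    ext z
    simp only [hcls, mem_setOf_eq] at hk' ⊢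
    constructor
    · rintro ⟨h1, h2⟩
      exact ⟨fun c j hj => ⟨(h1 c j hj).1.trans (hk'.1 c j hj).1,
        (h1 c j hj).2.trans (hk'.1 c j hj).2⟩, h2.trans hk'.2⟩
    · rintro ⟨h1, h2⟩
      exact ⟨fun c j hj => ⟨(h1 c j hj).1.trans (hk'.1 c j hj).1.symm,
        (h1 c j hj).2.trans (hk'.1 c j hj).2.symm⟩, h2.trans hk'.2.symm⟩
  -- cover K by finitely many classes
  have hcov : K ⊆ ⋃ k : K, cls ↑k := fun k hk => mem_iUnion.mpr ⟨⟨k, hk⟩, hcls_self k⟩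
  obtain ⟨T, hT⟩ := hK.isCompact.elim_finite_subcover (fun k : K => cls ↑k)
    (fun k => hcls_open ↑k) hcov
  obtain ⟨𝒮, h𝒮⟩ : ∃ S : Finset (Set X), S = T.image (fun k : ↥K => cls k.1) := ⟨_, rfl⟩
  have hrep : ∀ s : ↥𝒮, ∃ k : K, cls ↑k = (s : Set X) := by
    rintro ⟨s, hs⟩
    rw [h𝒮] at hs
    obtain ⟨k, hkT, hk⟩ := Finset.mem_image.mp hs
    exact ⟨k, hk⟩
  choose rep hrepeq using hrep
  -- envelopes
  have hEcompact : ∀ s : ↥𝒮, IsCompact (K ∩ (s : Set X)) := by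
    intro s
    have : IsClosed (s : Set X) := hrepeq s ▸ hcls_closed _
    exact (hK.inter this).isCompact
  have hEdis : Pairwise (Function.onFun Disjoint fun s : ↥𝒮 => K ∩ (s : Set X)) := by
    intro s t hst
    rw [Function.onFun, disjoint_left]
    rintro z ⟨hzK, hzs⟩ ⟨-, hzt⟩
    apply hst
    have h1 : cls z = (s : Set X) := by
      rw [← hrepeq s] at hzs ⊢
      exact hcls_mem_eq _ _ hzs
    have h2 : cls z = (t : Set X) := by
      rw [← hrepeq t] at hzt ⊢
      exact hcls_mem_eq _ _ hzt
    exact Subtype.ext (h1 ▸ h2)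
  obtain ⟨V, hVclopen, hVsub, hVdis⟩ := clopen_envelopes (X := X) (ι := ↥𝒮)
    (fun s => K ∩ (s : Set X)) hEcompact hEdis
  set V' : ↥𝒮 → Set X := fun s => V s ∩ (s : Set X) with hV'
  have hV'open : ∀ s, IsOpen (V' s) := by
    intro s
    refine (hVclopen s).isOpen.inter ?_
    rw [← hrepeq s]
    exact hcls_open _
  have hV'sub : ∀ s : ↥𝒮, K ∩ (s : Set X) ⊆ V' s := fun s =>
    subset_inter (hVsub s) inter_subset_right
  have hV'dis : ∀ s t : ↥𝒮, s ≠ t → ∀ y, y ∈ V' s → y ∈ V' t → False := by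
    intro s t hst y hys hyt
    exact (disjoint_left.mp (hVdis hst)) hys.1 hyt.1
  set ψ : X → ((μ → Bool) → μ → Bool) × ((μ → Bool) → μ → Bool) := fun y =>
    if h : ∃ s : ↥𝒮, y ∈ V' s then (W ↑(rep h.choose), W' ↑(rep h.choose)) else φ y with hψ
  have huniq : ∀ y (s : ↥𝒮), y ∈ V' s → ψ y = (W ↑(rep s), W' ↑(rep s)) := by
    intro y s hys
    have hex : ∃ s : ↥𝒮, y ∈ V' s := ⟨s, hys⟩
    have : hex.choose = s := by
      by_contra hne
      exact hV'dis _ _ hne y hex.choose_spec hys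
    simp only [hψ, dif_pos hex, this]
  have hnone : ∀ y, (¬ ∃ s : ↥𝒮, y ∈ V' s) → ψ y = φ y := by
    intro y hy
    simp only [hψ, dif_neg hy]
  -- membership in class of rep
  have hmemcls : ∀ y (s : ↥𝒮), y ∈ V' s → y ∈ cls ↑(rep s) := by
    intro y s hys
    rw [hrepeq s]
    exact hys.2
  have hKcov : ∀ k ∈ K, ∃ s : ↥𝒮, k ∈ V' s := by
    intro k hk
    obtain ⟨k₀, hk₀T, hk₀⟩ := mem_iUnion₂.mp (hT hk)
    have hs : cls ↑k₀ ∈ 𝒮 := by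
      rw [h𝒮]
      exact Finset.mem_image_of_mem _ hk₀T
    exact ⟨⟨cls ↑k₀, hs⟩, hV'sub _ ⟨hk, hk₀⟩⟩
  refine ⟨ψ, ?_, ?_, ?_, ?_⟩
  · -- locally constant
    intro x
    by_cases hx : ∃ s : ↥𝒮, x ∈ V' s
    · obtain ⟨s, hxs⟩ := hx
      exact ⟨V' s, hV'open s, hxs, fun y hy => (huniq y s hy).trans (huniq x s hxs).symm⟩
    · obtain ⟨O, hO, hxO, hOeq⟩ := hlc x
      refine ⟨O ∩ ⋂ s : ↥𝒮, (V' s)ᶜ, hO.inter (isOpen_iInter_of_finite fun s =>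
        ((hVclopen s).isClosed.inter ?_).isOpen_compl), ⟨hxO, mem_iInter.mpr fun s hxV => hx ⟨s, hxV⟩⟩, ?_⟩
      · rw [← hrepeq s]; exact hcls_closed _
      · intro y hy
        have hyn : ¬ ∃ s : ↥𝒮, y ∈ V' s := by
          rintro ⟨s, hys⟩
          exact (mem_iInter.mp hy.2 s) hys
        rw [hnone y hyn, hnone x hx, hOeq y hy.1]
  · -- good pairs
    intro x
    by_cases hx : ∃ s : ↥𝒮, x ∈ V' s
    · obtain ⟨s, hxs⟩ := hx
      rw [huniq x s hxs]
      have hkK : (↑(rep s) : X) ∈ K := (rep s).2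
      refine ⟨hWc.comp (continuous_const.prodMk continuous_id), 
        hW'c.comp (continuous_const.prodMk continuous_id),
        hWloc _, hW'loc _, (hinv _ hkK).1, (hinv _ hkK).2⟩
    · rw [hnone x hx]; exact hgp x
  · -- new level match on K
    intro k hk
    obtain ⟨s, hks⟩ := hKcov k hk
    rw [huniq k s hks]
    have hkcls : k ∈ cls ↑(rep s) := hmemcls k s hks
    intro c j hj
    exact ⟨(hkcls.1 c j hj).1.symm, (hkcls.1 c j hj).2.symm⟩
  · -- coherence at old level
    intro x
    by_cases hx : ∃ s : ↥𝒮, x ∈ V' s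
    · obtain ⟨s, hxs⟩ := hx
      rw [huniq x s hxs]
      have hxcls : x ∈ cls ↑(rep s) := hmemcls x s hxs
      have hkK : (↑(rep s) : X) ∈ K := (rep s).2
      have h1 : LevMatch Js (W ↑(rep s), W' ↑(rep s)) (φ ↑(rep s)) := (hkm _ hkK).symm'
      have h2 : φ (↑(rep s) : X) = φ x := hxcls.2.symm
      rw [← h2]
      exact h1
    · rw [hnone x hx]
      exact LevMatch.refl' _
end Stmt12Aux

namespace Stmt12Aux

variable {μ : Type*}

def lvl (e : ℕ → μ) (i : ℕ) : Set μ := e '' {m | m < i}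

theorem lvl_mono (e : ℕ → μ) {i i' : ℕ} (h : i ≤ i') : lvl e i ⊆ lvl e i' := by
  rintro j ⟨m, hm, rfl⟩; exact ⟨m, lt_of_lt_of_le hm h, rfl⟩

theorem lvl_fin (e : ℕ → μ) (i : ℕ) : (lvl e i).Finite := (finite_Iio i).image e

variable {X : Type*} [TopologicalSpace X]

def GoodFam (K : Set X) (N : Set μ) (W W' : X → (μ → Bool) → μ → Bool) (S : Set μ)
    (φ : X → ((μ → Bool) → μ → Bool) × ((μ → Bool) → μ → Bool)) : Prop :=
  (∀ x, ∃ O, IsOpen O ∧ x ∈ O ∧ ∀ y ∈ O, φ y = φ x) ∧ (∀ x, GoodPair N (φ x)) ∧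
    ∀ k ∈ K, LevMatch S (φ k) (W k, W' k)

variable [CompactSpace X] [T2Space X] [TotallyDisconnectedSpace X]

theorem cw {K : Set X} (hK : IsClosed K) (N : Set μ) (hN : N.Countable)
    (W W' : X → (μ → Bool) → μ → Bool)
    (hWc : Continuous fun p : X × (μ → Bool) => W p.1 p.2)
    (hW'c : Continuous fun p : X × (μ → Bool) => W' p.1 p.2)
    (hWloc : ∀ x, NLoc N (W x)) (hW'loc : ∀ x, NLoc N (W' x))
    (hinv : ∀ x ∈ K, (∀ c, W x (W' x c) = c) ∧ (∀ c, W' x (W x c) = c)) :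
    ∃ U V : X → (μ → Bool) → μ → Bool,
      (Continuous fun p : X × (μ → Bool) => U p.1 p.2) ∧
      (Continuous fun p : X × (μ → Bool) => V p.1 p.2) ∧
      (∀ x, NLoc N (U x)) ∧ (∀ x, NLoc N (V x)) ∧
      (∀ x c, U x (V x c) = c) ∧ (∀ x c, V x (U x c) = c) ∧
      (∀ k ∈ K, U k = W k ∧ V k = W' k) := by
  classical
  rcases N.eq_empty_or_nonempty with hNe | hNe
  · subst hNe
    refine ⟨W, W', hWc, hW'c, hWloc, hW'loc, ?_, ?_, fun k _ => ⟨rfl, rfl⟩⟩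
    · intro x c; funext j
      rw [(hWloc x).1 _ j (by simp), (hW'loc x).1 c j (by simp)]
    · intro x c; funext j
      rw [(hW'loc x).1 _ j (by simp), (hWloc x).1 c j (by simp)]
  obtain ⟨e, he⟩ := hN.exists_eq_range hNe
  have hJN : ∀ i, lvl e i ⊆ N := by
    intro i; rintro j ⟨m, -, rfl⟩; rw [he]; exact mem_range_self m
  have hgood0 : GoodFam K N W W' (lvl e 0) (fun _ => (id, id)) := by
    refine ⟨fun x => ⟨univ, isOpen_univ, mem_univ x, fun y _ => rfl⟩, ?_, ?_⟩
    · intro x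
      exact ⟨continuous_id, continuous_id, ⟨fun c j _ => rfl, fun c c' j hj h => h j hj⟩,
        ⟨fun c j _ => rfl, fun c c' j hj h => h j hj⟩, fun c => rfl, fun c => rfl⟩
    · rintro k hk c j ⟨m, hm, rfl⟩
      exact absurd hm (Nat.not_lt_zero m)
  have hstep : ∀ i φ, GoodFam K N W W' (lvl e i) φ →
      ∃ ψ, GoodFam K N W W' (lvl e (i + 1)) ψ ∧ ∀ x, LevMatch (lvl e i) (ψ x) (φ x) := by
    intro i φ hφ
    obtain ⟨ψ, h1, h2, h3, h4⟩ := cw_step hK W W' hWc hW'c hWloc hW'loc hinv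
      (lvl e (i + 1)) (lvl_fin e (i + 1)) (lvl e i) φ hφ.1 hφ.2.1 hφ.2.2
    exact ⟨ψ, ⟨h1, h2, h3⟩, h4⟩
  choose stepF hstepGood hstepCoh using hstep
  let Φ : ∀ i : ℕ, {φ : X → ((μ → Bool) → μ → Bool) × ((μ → Bool) → μ → Bool) //
      GoodFam K N W W' (lvl e i) φ} :=
    fun i => Nat.rec (motive := fun i =>
        {φ : X → ((μ → Bool) → μ → Bool) × ((μ → Bool) → μ → Bool) //
          GoodFam K N W W' (lvl e i) φ})
      ⟨fun _ => (id, id), hgood0⟩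
      (fun i p => ⟨stepF i p.1 p.2, hstepGood i p.1 p.2⟩) i
  have hΦcoh : ∀ i x, LevMatch (lvl e i) ((Φ (i + 1)).1 x) ((Φ i).1 x) :=
    fun i => hstepCoh i (Φ i).1 (Φ i).2
  have hstabd : ∀ d i x, LevMatch (lvl e i) ((Φ (i + d)).1 x) ((Φ i).1 x) := by
    intro d
    induction d with
    | zero => exact fun i x => LevMatch.refl' _
    | succ n ih =>
        intro i x
        have h1 : LevMatch (lvl e i) ((Φ (i + n + 1)).1 x) ((Φ (i + n)).1 x) :=
          LevMatch.mono (lvl_mono e (Nat.le_add_right i n)) (hΦcoh (i + n) x)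
        exact h1.trans' (ih i x)
  have hstab : ∀ i i', i ≤ i' → ∀ x, LevMatch (lvl e i) ((Φ i').1 x) ((Φ i).1 x) := by
    intro i i' hii x
    obtain ⟨d, rfl⟩ := Nat.exists_eq_add_of_le hii
    exact hstabd d i x
  set stage : μ → ℕ := fun j => if h : ∃ m, e m = j then h.choose + 1 else 0 with hstage
  have hstageJ : ∀ j ∈ N, j ∈ lvl e (stage j) := by
    intro j hj
    rw [he] at hj
    obtain ⟨m, hm⟩ := hj
    have hex : ∃ m, e m = j := ⟨m, hm⟩
    simp only [hstage, dif_pos hex]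
    exact ⟨hex.choose, Nat.lt_succ_self _, hex.choose_spec⟩
  set Uh : X → (μ → Bool) → μ → Bool := fun x c j =>
    if j ∈ N then ((Φ (stage j)).1 x).1 c j else c j with hUh
  set Vh : X → (μ → Bool) → μ → Bool := fun x c j =>
    if j ∈ N then ((Φ (stage j)).1 x).2 c j else c j with hVh
  have hkey : ∀ i x c, ∀ j ∈ lvl e i,
      Uh x c j = ((Φ i).1 x).1 c j ∧ Vh x c j = ((Φ i).1 x).2 c j := by
    intro i x c j hj
    have hjN : j ∈ N := hJN i hj
    have hjS : j ∈ lvl e (stage j) := hstageJ j hjN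
    have e1 := hstab i (max i (stage j)) (le_max_left _ _) x
    have e2 := hstab (stage j) (max i (stage j)) (le_max_right _ _) x
    constructor
    · have u1 : Uh x c j = ((Φ (stage j)).1 x).1 c j := by simp only [hUh, hjN, if_true]
      rw [u1, ← (e2 c j hjS).1, (e1 c j hj).1]
    · have u1 : Vh x c j = ((Φ (stage j)).1 x).2 c j := by simp only [hVh, hjN, if_true]
      rw [u1, ← (e2 c j hjS).2, (e1 c j hj).2]
  have hgp : ∀ i x, GoodPair N ((Φ i).1 x) := fun i x => (Φ i).2.2.1 x
  have hcontU : Continuous fun p : X × (μ → Bool) => Uh p.1 p.2 := by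
    apply continuous_pi
    intro j
    by_cases hj : j ∈ N
    · simp only [hUh, hj, if_true]
      apply family_continuous (u := fun x => ((Φ (stage j)).1 x).1)
      · intro x
        obtain ⟨O, h1, h2, h3⟩ := (Φ (stage j)).2.1 x
        exact ⟨O, h1, h2, fun y hy => by rw [h3 y hy]⟩
      · intro x
        exact (hgp (stage j) x).1
    · simp only [hUh, hj, if_false]
      exact (continuous_apply j).comp continuous_snd
  have hcontV : Continuous fun p : X × (μ → Bool) => Vh p.1 p.2 := by
    apply continuous_pi
    intro j
    by_cases hj : j ∈ N
    · simp only [hVh, hj, if_true]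
      apply family_continuous (u := fun x => ((Φ (stage j)).1 x).2)
      · intro x
        obtain ⟨O, h1, h2, h3⟩ := (Φ (stage j)).2.1 x
        exact ⟨O, h1, h2, fun y hy => by rw [h3 y hy]⟩
      · intro x
        exact (hgp (stage j) x).2.1
    · simp only [hVh, hj, if_false]
      exact (continuous_apply j).comp continuous_snd
  have hlocU : ∀ x, NLoc N (Uh x) := by
    intro x
    constructor
    · intro c j hj
      simp only [hUh, hj, if_false]
    · intro c c' j hj hcc
      simp only [hUh, hj, if_true]
      exact ((hgp (stage j) x).2.2.1).2 c c' j hj hcc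
  have hlocV : ∀ x, NLoc N (Vh x) := by
    intro x
    constructor
    · intro c j hj
      simp only [hVh, hj, if_false]
    · intro c c' j hj hcc
      simp only [hVh, hj, if_true]
      exact ((hgp (stage j) x).2.2.2.1).2 c c' j hj hcc
  have hUV : ∀ x c, Uh x (Vh x c) = c := by
    intro x c
    funext j
    by_cases hjN : j ∈ N
    · have hjS : j ∈ lvl e (stage j) := hstageJ j hjN
      obtain ⟨D, hDN, hD⟩ := finite_support_N (N := N) ((Φ (stage j)).1 x).1
        (hgp (stage j) x).1 ((hgp (stage j) x).2.2.1) hjN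
      have hMj : stage j ≤ max (stage j) (D.sup stage) := le_max_left _ _
      set M := max (stage j) (D.sup stage) with hM
      have hjM : j ∈ lvl e M := lvl_mono e hMj hjS
      have hsame : ∀ input, ((Φ M).1 x).1 input j = ((Φ (stage j)).1 x).1 input j := by
        intro input
        have h := (hkey M x input j hjM).1
        have h2 : Uh x input j = ((Φ (stage j)).1 x).1 input j := by
          simp only [hUh, hjN, if_true]
        rw [← h, h2]
      have hfib : ∀ d ∈ D, Vh x c d = ((Φ M).1 x).2 c d := by
        intro d hd
        have hdN : d ∈ N := hDN hd
        have hdM : d ∈ lvl e M :=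
          lvl_mono e (le_trans (Finset.le_sup hd) (le_max_right _ _)) (hstageJ d hdN)
        exact (hkey M x c d hdM).2
      calc Uh x (Vh x c) j = ((Φ M).1 x).1 (Vh x c) j := (hkey M x (Vh x c) j hjM).1
        _ = ((Φ (stage j)).1 x).1 (Vh x c) j := hsame _
        _ = ((Φ (stage j)).1 x).1 (((Φ M).1 x).2 c) j := hD _ _ (fun d hd => hfib d hd)
        _ = ((Φ M).1 x).1 (((Φ M).1 x).2 c) j := (hsame _).symm
        _ = c j := by rw [(hgp M x).2.2.2.2.1 c]
    · have h1 : Uh x (Vh x c) j = Vh x c j := by simp only [hUh, hjN, if_false]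
      have h2 : Vh x c j = c j := by simp only [hVh, hjN, if_false]
      rw [h1, h2]
  have hVU : ∀ x c, Vh x (Uh x c) = c := by
    intro x c
    funext j
    by_cases hjN : j ∈ N
    · have hjS : j ∈ lvl e (stage j) := hstageJ j hjN
      obtain ⟨D, hDN, hD⟩ := finite_support_N (N := N) ((Φ (stage j)).1 x).2
        (hgp (stage j) x).2.1 ((hgp (stage j) x).2.2.2.1) hjN
      have hMj : stage j ≤ max (stage j) (D.sup stage) := le_max_left _ _
      set M := max (stage j) (D.sup stage) with hM
      have hjM : j ∈ lvl e M := lvl_mono e hMj hjS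
      have hsame : ∀ input, ((Φ M).1 x).2 input j = ((Φ (stage j)).1 x).2 input j := by
        intro input
        have h := (hkey M x input j hjM).2
        have h2 : Vh x input j = ((Φ (stage j)).1 x).2 input j := by
          simp only [hVh, hjN, if_true]
        rw [← h, h2]
      have hfib : ∀ d ∈ D, Uh x c d = ((Φ M).1 x).1 c d := by
        intro d hd
        have hdN : d ∈ N := hDN hd
        have hdM : d ∈ lvl e M :=
          lvl_mono e (le_trans (Finset.le_sup hd) (le_max_right _ _)) (hstageJ d hdN)
        exact (hkey M x c d hdM).1
      calc Vh x (Uh x c) j = ((Φ M).1 x).2 (Uh x c) j := (hkey M x (Uh x c) j hjM).2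
        _ = ((Φ (stage j)).1 x).2 (Uh x c) j := hsame _
        _ = ((Φ (stage j)).1 x).2 (((Φ M).1 x).1 c) j := hD _ _ (fun d hd => hfib d hd)
        _ = ((Φ M).1 x).2 (((Φ M).1 x).1 c) j := (hsame _).symm
        _ = c j := by rw [(hgp M x).2.2.2.2.2 c]
    · have h1 : Vh x (Uh x c) j = Uh x c j := by simp only [hVh, hjN, if_false]
      have h2 : Uh x c j = c j := by simp only [hUh, hjN, if_false]
      rw [h1, h2]
  refine ⟨Uh, Vh, hcontU, hcontV, hlocU, hlocV, hUV, hVU, ?_⟩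
  intro k hk
  constructor
  · funext c j
    by_cases hjN : j ∈ N
    · have hjS : j ∈ lvl e (stage j) := hstageJ j hjN
      have h1 : Uh k c j = ((Φ (stage j)).1 k).1 c j := by simp only [hUh, hjN, if_true]
      rw [h1]
      exact ((Φ (stage j)).2.2.2 k hk c j hjS).1
    · have h1 : Uh k c j = c j := by simp only [hUh, hjN, if_false]
      rw [h1, (hWloc k).1 c j hjN]
  · funext c j
    by_cases hjN : j ∈ N
    · have hjS : j ∈ lvl e (stage j) := hstageJ j hjN
      have h1 : Vh k c j = ((Φ (stage j)).1 k).2 c j := by simp only [hVh, hjN, if_true]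
      rw [h1]
      exact ((Φ (stage j)).2.2.2 k hk c j hjS).2
    · have h1 : Vh k c j = c j := by simp only [hVh, hjN, if_false]
      rw [h1, (hW'loc k).1 c j hjN]

end Stmt12Aux

namespace Stmt12Aux

variable {Z : Type*} [TopologicalSpace Z] {μ : Type*}

structure Sol (K : Set Z) (H H' : Z × (μ → Bool) → μ → Bool) where
  S : Set μ
  U : Z → (μ → Bool) → μ → Bool
  V : Z → (μ → Bool) → μ → Bool
  Ucont : Continuous fun p : Z × (μ → Bool) => U p.1 p.2
  Vcont : Continuous fun p : Z × (μ → Bool) => V p.1 p.2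
  Uid : ∀ z c j, j ∉ S → U z c j = c j
  Vid : ∀ z c j, j ∉ S → V z c j = c j
  Uloc : ∀ z c c' j, j ∈ S → (∀ i ∈ S, c i = c' i) → U z c j = U z c' j
  Vloc : ∀ z c c' j, j ∈ S → (∀ i ∈ S, c i = c' i) → V z c j = V z c' j
  UV : ∀ z c, U z (V z c) = c
  VU : ∀ z c, V z (U z c) = c
  hU : ∀ z ∈ K, ∀ c, ∀ j ∈ S, U z c j = H (z, c) j
  hV : ∀ z ∈ K, ∀ c, ∀ j ∈ S, V z c j = H' (z, c) j

instance {K : Set Z} {H H' : Z × (μ → Bool) → μ → Bool} : Preorder (Sol K H H') where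
  le a b := a.S ⊆ b.S ∧ ∀ z c j, j ∈ a.S → b.U z c j = a.U z c j ∧ b.V z c j = a.V z c j
  le_refl a := ⟨subset_rfl, fun _ _ _ _ => ⟨rfl, rfl⟩⟩
  le_trans a b c hab hbc := ⟨hab.1.trans hbc.1, fun z x j hj =>
    ⟨(hbc.2 z x j (hab.1 hj)).1.trans (hab.2 z x j hj).1,
     (hbc.2 z x j (hab.1 hj)).2.trans (hab.2 z x j hj).2⟩⟩

theorem sol_le_def {K : Set Z} {H H' : Z × (μ → Bool) → μ → Bool} {a b : Sol K H H'} :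
    a ≤ b ↔ a.S ⊆ b.S ∧ ∀ z c j, j ∈ a.S →
      b.U z c j = a.U z c j ∧ b.V z c j = a.V z c j := Iff.rfl

variable [CompactSpace Z] [T2Space Z] [TotallyDisconnectedSpace Z]

theorem zorn_ext {K : Set Z} (hK : IsClosed K)
    (H H' : Z × (μ → Bool) → μ → Bool)
    (hHc : Continuous H) (hH'c : Continuous H')
    (hinv1 : ∀ z ∈ K, ∀ c, H (z, H' (z, c)) = c)
    (hinv2 : ∀ z ∈ K, ∀ c, H' (z, H (z, c)) = c) :
    ∃ U V : Z → (μ → Bool) → μ → Bool,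
      (Continuous fun p : Z × (μ → Bool) => U p.1 p.2) ∧
      (Continuous fun p : Z × (μ → Bool) => V p.1 p.2) ∧
      (∀ z c, U z (V z c) = c) ∧ (∀ z c, V z (U z c) = c) ∧
      (∀ z ∈ K, ∀ c, U z c = H (z, c) ∧ V z c = H' (z, c)) := by
  classical
  -- Zorn: every chain is bounded above
  have hbdd : ∀ ch : Set (Sol K H H'), IsChain (· ≤ ·) ch → BddAbove ch := by
    intro ch hch
    set SS : Set μ := {j | ∃ s ∈ ch, j ∈ Sol.S s} with hSS
    have hcompat : ∀ s ∈ ch, ∀ t ∈ ch, ∀ j, j ∈ Sol.S s → j ∈ Sol.S t → ∀ z x,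
        Sol.U s z x j = Sol.U t z x j ∧ Sol.V s z x j = Sol.V t z x j := by
      intro s hs t ht j hjs hjt z x
      rcases hch.total hs ht with h | h
      · exact ⟨(h.2 z x j hjs).1.symm, (h.2 z x j hjs).2.symm⟩
      · exact ⟨(h.2 z x j hjt).1, (h.2 z x j hjt).2⟩
    set UU : Z → (μ → Bool) → μ → Bool := fun z x j =>
      if h : j ∈ SS then (Sol.U h.choose z x j) else x j with hUU
    set VV : Z → (μ → Bool) → μ → Bool := fun z x j =>
      if h : j ∈ SS then (Sol.V h.choose z x j) else x j with hVV
    have hchoose : ∀ j (h : j ∈ SS), h.choose ∈ ch ∧ j ∈ Sol.S h.choose := fun j h =>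
      ⟨h.choose_spec.1, h.choose_spec.2⟩
    have hUUeq : ∀ s ∈ ch, ∀ j, j ∈ Sol.S s → ∀ z x, UU z x j = Sol.U s z x j := by
      intro s hs j hj z x
      have hjSS : j ∈ SS := ⟨s, hs, hj⟩
      simp only [hUU, dif_pos hjSS]
      exact (hcompat _ (hchoose j hjSS).1 s hs j (hchoose j hjSS).2 hj z x).1
    have hVVeq : ∀ s ∈ ch, ∀ j, j ∈ Sol.S s → ∀ z x, VV z x j = Sol.V s z x j := by
      intro s hs j hj z x
      have hjSS : j ∈ SS := ⟨s, hs, hj⟩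
      simp only [hVV, dif_pos hjSS]
      exact (hcompat _ (hchoose j hjSS).1 s hs j (hchoose j hjSS).2 hj z x).2
    refine ⟨⟨SS, UU, VV, ?_, ?_, ?_, ?_, ?_, ?_, ?_, ?_, ?_, ?_⟩, ?_⟩
    · apply continuous_pi
      intro j
      by_cases h : j ∈ SS
      · simp only [hUU, dif_pos h]
        exact (continuous_apply j).comp (Sol.Ucont h.choose)
      · simp only [hUU, dif_neg h]
        exact (continuous_apply j).comp continuous_snd
    · apply continuous_pi
      intro j
      by_cases h : j ∈ SS
      · simp only [hVV, dif_pos h]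
        exact (continuous_apply j).comp (Sol.Vcont h.choose)
      · simp only [hVV, dif_neg h]
        exact (continuous_apply j).comp continuous_snd
    · intro z c j hj
      simp only [hUU, dif_neg hj]
    · intro z c j hj
      simp only [hVV, dif_neg hj]
    · intro z c c' j hj hcc
      obtain ⟨s, hs, hjs⟩ := hj
      rw [hUUeq s hs j hjs, hUUeq s hs j hjs]
      exact Sol.Uloc s z c c' j hjs (fun i hi => hcc i ⟨s, hs, hi⟩)
    · intro z c c' j hj hcc
      obtain ⟨s, hs, hjs⟩ := hj
      rw [hVVeq s hs j hjs, hVVeq s hs j hjs]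
      exact Sol.Vloc s z c c' j hjs (fun i hi => hcc i ⟨s, hs, hi⟩)
    · intro z c
      funext j
      by_cases hj : j ∈ SS
      · obtain ⟨s, hs, hjs⟩ := hj
        rw [hUUeq s hs j hjs]
        have h1 : Sol.U s z (VV z c) j = Sol.U s z (Sol.V s z c) j :=
          Sol.Uloc s z _ _ j hjs (fun i hi => hVVeq s hs i hi z c)
        rw [h1]
        exact congrFun (Sol.UV s z c) j
      · have h0 : UU z (VV z c) j = VV z c j := by simp only [hUU, dif_neg hj]
        have h1 : VV z c j = c j := by simp only [hVV, dif_neg hj]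
        rw [h0, h1]
    · intro z c
      funext j
      by_cases hj : j ∈ SS
      · obtain ⟨s, hs, hjs⟩ := hj
        rw [hVVeq s hs j hjs]
        have h1 : Sol.V s z (UU z c) j = Sol.V s z (Sol.U s z c) j :=
          Sol.Vloc s z _ _ j hjs (fun i hi => hUUeq s hs i hi z c)
        rw [h1]
        exact congrFun (Sol.VU s z c) j
      · have h0 : VV z (UU z c) j = UU z c j := by simp only [hVV, dif_neg hj]
        have h1 : UU z c j = c j := by simp only [hUU, dif_neg hj]
        rw [h0, h1]
    · intro z hz c j hj
      obtain ⟨s, hs, hjs⟩ := hj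
      rw [hUUeq s hs j hjs]
      exact Sol.hU s z hz c j hjs
    · intro z hz c j hj
      obtain ⟨s, hs, hjs⟩ := hj
      rw [hVVeq s hs j hjs]
      exact Sol.hV s z hz c j hjs
    · intro s hs
      refine ⟨fun j hj => ⟨s, hs, hj⟩, fun z c j hj => ⟨hUUeq s hs j hj z c, hVVeq s hs j hj z c⟩⟩
  obtain ⟨m, hm⟩ := zorn_le hbdd
  -- maximal solution is total
  have hSuniv : m.S = univ := by
    by_contra hne
    have hex : ∃ j₀, j₀ ∉ m.S := by
      by_contra h
      push_neg at h
      exact hne (eq_univ_of_forall h)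
    obtain ⟨j₀, hj₀⟩ := hex
    -- dependency sets
    have hdep : ∀ j : μ, ∃ D : Finset μ, ∀ (z : Z) (c c' : μ → Bool),
        (∀ i ∈ D, c i = c' i) → H (z, c) j = H (z, c') j ∧ H' (z, c) j = H' (z, c') j := by
      intro j
      obtain ⟨D1, hD1⟩ := finite_support (Y := Z) (fun p => H p j) ((continuous_apply j).comp hHc)
      obtain ⟨D2, hD2⟩ := finite_support (Y := Z) (fun p => H' p j) ((continuous_apply j).comp hH'c)
      exact ⟨D1 ∪ D2, fun z c c' h =>
        ⟨hD1 z c c' (fun i hi => h i (Finset.mem_union_left _ hi)),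
         hD2 z c c' (fun i hi => h i (Finset.mem_union_right _ hi))⟩⟩
    choose Dep hDep using hdep
    -- countable dependency closure of j₀
    have hRex : ∃ R : ℕ → Finset μ, R 0 = {j₀} ∧ ∀ n, R (n + 1) = R n ∪ (R n).biUnion Dep :=
      ⟨fun n => Nat.rec {j₀} (fun _ s => s ∪ s.biUnion Dep) n, rfl, fun n => rfl⟩
    obtain ⟨R, hR0, hRsucc⟩ := hRex
    set Ncl : Set μ := ⋃ n, ↑(R n) with hNcl
    have hNclct : Ncl.Countable := countable_iUnion fun n => (R n).countable_toSet
    have hj₀Ncl : j₀ ∈ Ncl := mem_iUnion.mpr ⟨0, by rw [hR0]; simp⟩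
    have hNcldep : ∀ j ∈ Ncl, ∀ i ∈ Dep j, i ∈ Ncl := by
      intro j hj i hi
      obtain ⟨nset, ⟨n, rfl⟩, hn⟩ := hj
      refine mem_iUnion.mpr ⟨n + 1, ?_⟩
      rw [Finset.mem_coe, hRsucc n]
      exact Finset.mem_union_right _ (Finset.mem_biUnion.mpr ⟨j, Finset.mem_coe.mp hn, hi⟩)
    set N : Set μ := Ncl \ m.S with hN
    have hj₀N : j₀ ∈ N := ⟨hj₀Ncl, hj₀⟩
    have hNS : ∀ i, i ∈ m.S → i ∉ N := fun i hi hiN => hiN.2 hi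
    have hDepMS : ∀ j ∈ N, ∀ i ∈ Dep j, i ∈ m.S ∨ i ∈ N := by
      intro j hj i hi
      have : i ∈ Ncl := hNcldep j hj.1 i hi
      by_cases h : i ∈ m.S
      · exact Or.inl h
      · exact Or.inr ⟨this, h⟩
    -- `H` and `H'` are `m.S`-local on `m.S`-outputs over `K`
    have hS1 : ∀ z ∈ K, ∀ c c', (∀ i ∈ m.S, c i = c' i) → ∀ j ∈ m.S,
        H (z, c) j = H (z, c') j := by
      intro z hz c c' hcc j hj
      rw [← m.hU z hz c j hj, ← m.hU z hz c' j hj]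
      exact m.Uloc z c c' j hj hcc
    have hS1' : ∀ z ∈ K, ∀ c c', (∀ i ∈ m.S, c i = c' i) → ∀ j ∈ m.S,
        H' (z, c) j = H' (z, c') j := by
      intro z hz c c' hcc j hj
      rw [← m.hV z hz c j hj, ← m.hV z hz c' j hj]
      exact m.Vloc z c c' j hj hcc
    set mix : (μ → Bool) → (μ → Bool) → μ → Bool :=
      fun b c j => if j ∈ m.S then b j else c j with hmix
    have hmixc : Continuous fun q : (μ → Bool) × (μ → Bool) => mix q.1 q.2 := by
      apply continuous_pi; intro i
      by_cases h : i ∈ m.S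
      · simp only [hmix, h, if_true]; exact (continuous_apply i).comp continuous_fst
      · simp only [hmix, h, if_false]; exact (continuous_apply i).comp continuous_snd
    set Wc : Z × (μ → Bool) → (μ → Bool) → μ → Bool := fun p c j =>
      if j ∈ N then H (p.1, mix p.2 c) j else c j with hWcd
    set Wc' : Z × (μ → Bool) → (μ → Bool) → μ → Bool := fun p c j =>
      if j ∈ N then H' (p.1, mix (H p) c) j else c j with hWc'd
    have hWccont : Continuous fun q : (Z × (μ → Bool)) × (μ → Bool) => Wc q.1 q.2 := by
      apply continuous_pi; intro j
      by_cases h : j ∈ N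
      · simp only [hWcd, h, if_true]
        exact (continuous_apply j).comp (hHc.comp ((continuous_fst.comp continuous_fst).prodMk
          (hmixc.comp ((continuous_snd.comp continuous_fst).prodMk continuous_snd))))
      · simp only [hWcd, h, if_false]
        exact (continuous_apply j).comp continuous_snd
    have hWc'cont : Continuous fun q : (Z × (μ → Bool)) × (μ → Bool) => Wc' q.1 q.2 := by
      apply continuous_pi; intro j
      by_cases h : j ∈ N
      · simp only [hWc'd, h, if_true]
        exact (continuous_apply j).comp (hH'c.comp ((continuous_fst.comp continuous_fst).prodMk
          (hmixc.comp ((hHc.comp continuous_fst).prodMk continuous_snd))))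
      · simp only [hWc'd, h, if_false]
        exact (continuous_apply j).comp continuous_snd
    have hHdep : ∀ z c c' j, (∀ i ∈ Dep j, c i = c' i) → H (z, c) j = H (z, c') j :=
      fun z c c' j h => (hDep j z c c' h).1
    have hH'dep : ∀ z c c' j, (∀ i ∈ Dep j, c i = c' i) → H' (z, c) j = H' (z, c') j :=
      fun z c c' j h => (hDep j z c c' h).2
    have hWcloc : ∀ p, NLoc N (Wc p) := by
      intro p
      constructor
      · intro c j hj; simp only [hWcd, hj, if_false]
      · intro c c' j hj hcc
        simp only [hWcd, hj, if_true]
        apply hHdep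
        intro i hi
        rcases hDepMS j hj i hi with h | h
        · simp only [hmix, h, if_true]
        · have hns : i ∉ m.S := h.2
          simp only [hmix, hns, if_false]
          exact hcc i h
    have hWc'loc : ∀ p, NLoc N (Wc' p) := by
      intro p
      constructor
      · intro c j hj; simp only [hWc'd, hj, if_false]
      · intro c c' j hj hcc
        simp only [hWc'd, hj, if_true]
        apply hH'dep
        intro i hi
        rcases hDepMS j hj i hi with h | h
        · simp only [hmix, h, if_true]
        · have hns : i ∉ m.S := h.2
          simp only [hmix, hns, if_false]
          exact hcc i h
    have hWinv : ∀ p : Z × (μ → Bool), p.1 ∈ K →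
        (∀ c, Wc p (Wc' p c) = c) ∧ (∀ c, Wc' p (Wc p c) = c) := by
      rintro ⟨z, b⟩ hz
      constructor
      · intro c
        funext j
        by_cases hj : j ∈ N
        · have hd : ∀ i ∈ N, Wc' (z, b) c i = H' (z, mix (H (z, b)) c) i := by
            intro i hi; simp only [hWc'd, hi, if_true]
          have e0 : Wc (z, b) (Wc' (z, b) c) j = H (z, mix b (Wc' (z, b) c)) j := by
            simp only [hWcd, hj, if_true]
          rw [e0]
          have e1 : H (z, mix b (Wc' (z, b) c)) j
              = H (z, mix b (H' (z, mix (H (z, b)) c))) j := by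
            apply hHdep
            intro i hi
            rcases hDepMS j hj i hi with h | h
            · simp only [hmix, h, if_true]
            · have hns : i ∉ m.S := h.2
              simp only [hmix, hns, if_false]
              exact hd i h
          rw [e1]
          have e2 : H (z, mix b (H' (z, mix (H (z, b)) c))) j
              = H (z, H' (z, mix (H (z, b)) c)) j := by
            apply hHdep
            intro i hi
            by_cases h : i ∈ m.S
            · simp only [hmix, h, if_true]
              have hagree : ∀ i' ∈ m.S, (mix (H (z, b)) c) i' = (H (z, b)) i' := by
                intro i' hi'; simp only [hmix, hi', if_true]
              have hx := hS1' z hz (mix (H (z, b)) c) (H (z, b)) hagree i h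
              rw [hx, hinv2 z hz b]
            · simp only [hmix, h, if_false]
          rw [e2, hinv1 z hz]
          have hjns : j ∉ m.S := fun h => hNS j h hj
          simp only [hmix, hjns, if_false]
        · have h0 : Wc (z, b) (Wc' (z, b) c) j = Wc' (z, b) c j := by
            simp only [hWcd, hj, if_false]
          have h1 : Wc' (z, b) c j = c j := by simp only [hWc'd, hj, if_false]
          rw [h0, h1]
      · intro c
        funext j
        by_cases hj : j ∈ N
        · have hd : ∀ i ∈ N, Wc (z, b) c i = H (z, mix b c) i := by
            intro i hi; simp only [hWcd, hi, if_true]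
          have e0 : Wc' (z, b) (Wc (z, b) c) j = H' (z, mix (H (z, b)) (Wc (z, b) c)) j := by
            simp only [hWc'd, hj, if_true]
          rw [e0]
          have e1 : H' (z, mix (H (z, b)) (Wc (z, b) c)) j = H' (z, H (z, mix b c)) j := by
            apply hH'dep
            intro i hi
            by_cases h : i ∈ m.S
            · simp only [hmix, h, if_true]
              have hagree : ∀ i' ∈ m.S, (mix b c) i' = b i' := by
                intro i' hi'; simp only [hmix, hi', if_true]
              exact (hS1 z hz (mix b c) b hagree i h).symm
            · simp only [hmix, h, if_false]
              have hiN : i ∈ N := (hDepMS j hj i hi).resolve_left h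
              exact hd i hiN
          rw [e1, hinv2 z hz]
          have hjns : j ∉ m.S := fun h => hNS j h hj
          simp only [hmix, hjns, if_false]
        · have h0 : Wc' (z, b) (Wc (z, b) c) j = Wc (z, b) c j := by
            simp only [hWc'd, hj, if_false]
          have h1 : Wc (z, b) c j = c j := by simp only [hWcd, hj, if_false]
          rw [h0, h1]
    have hKhat : IsClosed (Prod.fst ⁻¹' K : Set (Z × (μ → Bool))) := hK.preimage continuous_fst
    have hNct : N.Countable := hNclct.mono diff_subset
    obtain ⟨Wh, Wh', hWhc, hWh'c, hWhloc, hWh'loc, hWhUV, hWhVU, hWhK⟩ :=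
      cw hKhat N hNct Wc Wc' hWccont hWc'cont hWcloc hWc'loc (fun p hp => hWinv p hp)
    set πS : (μ → Bool) → μ → Bool := fun c j => if j ∈ m.S then c j else false with hπS
    have hπScont : Continuous πS := by
      apply continuous_pi; intro i
      by_cases h : i ∈ m.S
      · simp only [hπS, h, if_true]; exact continuous_apply i
      · simp only [hπS, h, if_false]; exact continuous_const
    have hπSeq : ∀ c c', (∀ i ∈ m.S, c i = c' i) → πS c = πS c' := by
      intro c c' h; funext i
      by_cases hi : i ∈ m.S
      · simp only [hπS, hi, if_true]; exact h i hi
      · simp only [hπS, hi, if_false]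
    have hmixπ : ∀ c, mix (πS c) c = c := by
      intro c; funext i
      by_cases hi : i ∈ m.S <;> simp [hmix, hπS, hi]
    set U' : Z → (μ → Bool) → μ → Bool := fun z c j =>
      if j ∈ N then Wh (z, πS c) c j else m.U z c j with hU'd
    set V' : Z → (μ → Bool) → μ → Bool := fun z c j =>
      if j ∈ N then Wh' (z, πS (m.V z c)) c j else m.V z c j with hV'd
    have hU'S : ∀ z c j, j ∈ m.S → U' z c j = m.U z c j := by
      intro z c j hj
      have h : j ∉ N := hNS j hj
      simp only [hU'd, h, if_false]
    have hV'S : ∀ z c j, j ∈ m.S → V' z c j = m.V z c j := by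
      intro z c j hj
      have h : j ∉ N := hNS j hj
      simp only [hV'd, h, if_false]
    set m' : Sol K H H' :=
      { S := m.S ∪ N
        U := U'
        V := V'
        Ucont := by
          apply continuous_pi; intro j
          by_cases h : j ∈ N
          · simp only [hU'd, h, if_true]
            exact (continuous_apply j).comp (hWhc.comp
              ((continuous_fst.prodMk (hπScont.comp continuous_snd)).prodMk continuous_snd))
          · simp only [hU'd, h, if_false]
            exact (continuous_apply j).comp m.Ucont
        Vcont := by
          apply continuous_pi; intro j
          by_cases h : j ∈ N
          · simp only [hV'd, h, if_true]
            exact (continuous_apply j).comp (hWh'c.comp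
              ((continuous_fst.prodMk (hπScont.comp m.Vcont)).prodMk continuous_snd))
          · simp only [hV'd, h, if_false]
            exact (continuous_apply j).comp m.Vcont
        Uid := by
          intro z c j hj
          have h1 : j ∉ N := fun h => hj (Or.inr h)
          have h2 : j ∉ m.S := fun h => hj (Or.inl h)
          simp only [hU'd, h1, if_false]
          exact m.Uid z c j h2
        Vid := by
          intro z c j hj
          have h1 : j ∉ N := fun h => hj (Or.inr h)
          have h2 : j ∉ m.S := fun h => hj (Or.inl h)
          simp only [hV'd, h1, if_false]
          exact m.Vid z c j h2
        Uloc := by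
          intro z c c' j hj hcc
          by_cases hjN : j ∈ N
          · simp only [hU'd, hjN, if_true]
            have e1 : πS c = πS c' := hπSeq _ _ (fun i hi => hcc i (Or.inl hi))
            rw [← e1]
            exact (hWhloc (z, πS c)).2 c c' j hjN (fun i hi => hcc i (Or.inr hi))
          · have hjS : j ∈ m.S := hj.resolve_right hjN
            rw [hU'S z c j hjS, hU'S z c' j hjS]
            exact m.Uloc z c c' j hjS (fun i hi => hcc i (Or.inl hi))
        Vloc := by
          intro z c c' j hj hcc
          by_cases hjN : j ∈ N
          · simp only [hV'd, hjN, if_true]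
            have e1 : πS (m.V z c) = πS (m.V z c') := by
              apply hπSeq
              intro i hi
              exact m.Vloc z c c' i hi (fun i' hi' => hcc i' (Or.inl hi'))
            rw [← e1]
            exact (hWh'loc (z, πS (m.V z c))).2 c c' j hjN (fun i hi => hcc i (Or.inr hi))
          · have hjS : j ∈ m.S := hj.resolve_right hjN
            rw [hV'S z c j hjS, hV'S z c' j hjS]
            exact m.Vloc z c c' j hjS (fun i hi => hcc i (Or.inl hi))
        UV := by
          intro z c
          funext j
          by_cases hjN : j ∈ N
          · have e0 : U' z (V' z c) j = Wh (z, πS (V' z c)) (V' z c) j := by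
              simp only [hU'd, hjN, if_true]
            have e1 : πS (V' z c) = πS (m.V z c) :=
              hπSeq _ _ (fun i hi => hV'S z c i hi)
            have e2 : ∀ i ∈ N, V' z c i = Wh' (z, πS (m.V z c)) c i := by
              intro i hi; simp only [hV'd, hi, if_true]
            rw [e0, e1]
            have e3 : Wh (z, πS (m.V z c)) (V' z c) j
                = Wh (z, πS (m.V z c)) (Wh' (z, πS (m.V z c)) c) j :=
              (hWhloc (z, πS (m.V z c))).2 _ _ j hjN e2
            rw [e3, hWhUV (z, πS (m.V z c)) c]
          · by_cases hjS : j ∈ m.S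
            · rw [hU'S z _ j hjS]
              have e1 : m.U z (V' z c) j = m.U z (m.V z c) j :=
                m.Uloc z _ _ j hjS (fun i hi => hV'S z c i hi)
              rw [e1]
              exact congrFun (m.UV z c) j
            · have e0 : U' z (V' z c) j = m.U z (V' z c) j := by
                simp only [hU'd, hjN, if_false]
              rw [e0, m.Uid z _ j hjS]
              have e1 : V' z c j = m.V z c j := by simp only [hV'd, hjN, if_false]
              rw [e1, m.Vid z c j hjS]
        VU := by
          intro z c
          funext j
          by_cases hjN : j ∈ N
          · have e0 : V' z (U' z c) j = Wh' (z, πS (m.V z (U' z c))) (U' z c) j := by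
              simp only [hV'd, hjN, if_true]
            have ebase : πS (m.V z (U' z c)) = πS c := by
              funext i
              by_cases hi : i ∈ m.S
              · have h1 : m.V z (U' z c) i = m.V z (m.U z c) i :=
                  m.Vloc z _ _ i hi (fun i' hi' => hU'S z c i' hi')
                have h2 : m.V z (m.U z c) i = c i := congrFun (m.VU z c) i
                simp only [hπS, hi, if_true]
                rw [h1, h2]
              · simp only [hπS, hi, if_false]
            have efib : ∀ i ∈ N, U' z c i = Wh (z, πS c) c i := by
              intro i hi; simp only [hU'd, hi, if_true]
            rw [e0, ebase]
            have e3 : Wh' (z, πS c) (U' z c) j = Wh' (z, πS c) (Wh (z, πS c) c) j :=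
              (hWh'loc (z, πS c)).2 _ _ j hjN efib
            rw [e3, hWhVU (z, πS c) c]
          · by_cases hjS : j ∈ m.S
            · rw [hV'S z _ j hjS]
              have e1 : m.V z (U' z c) j = m.V z (m.U z c) j :=
                m.Vloc z _ _ j hjS (fun i hi => hU'S z c i hi)
              rw [e1]
              exact congrFun (m.VU z c) j
            · have e0 : V' z (U' z c) j = m.V z (U' z c) j := by
                simp only [hV'd, hjN, if_false]
              rw [e0, m.Vid z _ j hjS]
              have e1 : U' z c j = m.U z c j := by simp only [hU'd, hjN, if_false]
              rw [e1, m.Uid z c j hjS]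
        hU := by
          intro z hz c j hj
          by_cases hjN : j ∈ N
          · have e0 : U' z c j = Wh (z, πS c) c j := by simp only [hU'd, hjN, if_true]
            have hz' : (z, πS c) ∈ (Prod.fst ⁻¹' K : Set (Z × (μ → Bool))) := hz
            have e1 := (hWhK (z, πS c) hz').1
            rw [e0, e1]
            have e2 : Wc (z, πS c) c j = H (z, mix (πS c) c) j := by
              simp only [hWcd, hjN, if_true]
            rw [e2, hmixπ c]
          · have hjS : j ∈ m.S := hj.resolve_right hjN
            rw [hU'S z c j hjS]
            exact m.hU z hz c j hjS
        hV := by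
          intro z hz c j hj
          by_cases hjN : j ∈ N
          · have e0 : V' z c j = Wh' (z, πS (m.V z c)) c j := by
              simp only [hV'd, hjN, if_true]
            have hz' : (z, πS (m.V z c)) ∈ (Prod.fst ⁻¹' K : Set (Z × (μ → Bool))) := hz
            have e1 := (hWhK (z, πS (m.V z c)) hz').2
            rw [e0, e1]
            have e2 : Wc' (z, πS (m.V z c)) c j
                = H' (z, mix (H (z, πS (m.V z c))) c) j := by
              simp only [hWc'd, hjN, if_true]
            rw [e2]
            apply hH'dep
            intro i hi
            rcases hDepMS j hjN i hi with h | h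
            · simp only [hmix, h, if_true]
              have hb : ∀ i' ∈ m.S, (πS (m.V z c)) i' = (H' (z, c)) i' := by
                intro i' hi'
                simp only [hπS, hi', if_true]
                exact m.hV z hz c i' hi'
              have hx := hS1 z hz (πS (m.V z c)) (H' (z, c)) hb i h
              rw [hx]
              exact congrFun (hinv1 z hz c) i
            · have hns : i ∉ m.S := h.2
              simp only [hmix, hns, if_false]
          · have hjS : j ∈ m.S := hj.resolve_right hjN
            rw [hV'S z c j hjS]
            exact m.hV z hz c j hjS } with hm'd
    have hle : m ≤ m' := by
      refine ⟨subset_union_left, fun z c j hj => ⟨hU'S z c j hj, hV'S z c j hj⟩⟩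
    have hge := hm hle
    exact hj₀ (hge.1 (Or.inr hj₀N))
  refine ⟨m.U, m.V, m.Ucont, m.Vcont, m.UV, m.VU, ?_⟩
  intro z hz c
  constructor
  · funext j
    exact m.hU z hz c j (hSuniv ▸ mem_univ j)
  · funext j
    exact m.hV z hz c j (hSuniv ▸ mem_univ j)

end Stmt12Aux




namespace Stmt12Aux

theorem main {A : Type u} (P : Set (A → ℕ → Bool)) (hP : IsClosed P)
    (f : P ≃ₜ P) (B : Set A)
    (hprod : P = proj B ⁻¹' (proj B '' P))
    (fB : (proj B '' P : Set (∀ b : B, ℕ → Bool)) ≃ₜ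
      (proj B '' P : Set (∀ b : B, ℕ → Bool)))
    (hfB : ∀ p : P, (fB ⟨proj B p.1, ⟨p.1, p.2, rfl⟩⟩).1 = proj B (f p).1)
    (FB : (∀ b : B, ℕ → Bool) ≃ₜ (∀ b : B, ℕ → Bool))
    (hFB : ∀ y : (proj B '' P : Set (∀ b : B, ℕ → Bool)), FB ↑y = ↑(fB y)) :
    ∃ F : (A → ℕ → Bool) ≃ₜ (A → ℕ → Bool), ∀ p : P, F ↑p = ↑(f p) := by
  classical
  set glue : (∀ b : B, ℕ → Bool) → ({a : A // a ∉ B} × ℕ → Bool) → A → ℕ → Bool :=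
    fun z c a n => if h : a ∈ B then z ⟨a, h⟩ n else c (⟨a, h⟩, n) with hglued
  set fib : (A → ℕ → Bool) → {a : A // a ∉ B} × ℕ → Bool :=
    fun x q => x q.1.1 q.2 with hfibd
  have hproj_glue : ∀ z c, proj B (glue z c) = z := by
    intro z c
    funext b n
    show glue z c ↑b n = z b n
    simp only [hglued]
    rw [dif_pos b.2]
  have hfib_glue : ∀ z c, fib (glue z c) = c := by
    intro z c
    funext q
    show glue z c q.1.1 q.2 = c q
    simp only [hglued]
    rw [dif_neg q.1.2]
  have hglue_proj_fib : ∀ x, glue (proj B x) (fib x) = x := by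
    intro x
    funext a n
    simp only [hglued]
    by_cases h : a ∈ B
    · rw [dif_pos h]; rfl
    · rw [dif_neg h]
  have hgluec : Continuous fun p : (∀ b : B, ℕ → Bool) × ({a : A // a ∉ B} × ℕ → Bool) =>
      glue p.1 p.2 := by
    apply continuous_pi; intro a
    apply continuous_pi; intro n
    simp only [hglued]
    by_cases h : a ∈ B
    · simp only [dif_pos h]
      exact (continuous_apply n).comp ((continuous_apply (⟨a, h⟩ : B)).comp continuous_fst)
    · simp only [dif_neg h]
      exact (continuous_apply _).comp continuous_snd
  have hprojc : Continuous fun x : A → ℕ → Bool => proj B x :=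
    continuous_pi fun b => continuous_apply _
  have hfibc : Continuous fib := by
    apply continuous_pi; intro q
    exact (continuous_apply q.2).comp (continuous_apply q.1.1)
  have hKclosed : IsClosed (proj B '' P) := ((hP.isCompact).image hprojc).isClosed
  have hmemP : ∀ z c, z ∈ proj B '' P → glue z c ∈ P := by
    intro z c hz
    rw [hprod, mem_preimage, hproj_glue]
    exact hz
  -- the total truth maps
  have hsclosed : IsClosed {p : (∀ b : B, ℕ → Bool) × ({a : A // a ∉ B} × ℕ → Bool) |
      p.1 ∈ proj B '' P} := hKclosed.preimage continuous_fst
  set truH : (∀ b : B, ℕ → Bool) × ({a : A // a ∉ B} × ℕ → Bool) →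
      {a : A // a ∉ B} × ℕ → Bool := fun p =>
    if h : p.1 ∈ proj B '' P then
      fib ((f ⟨glue p.1 p.2, hmemP p.1 p.2 h⟩ : P) : A → ℕ → Bool) else p.2 with htruHd
  set truH' : (∀ b : B, ℕ → Bool) × ({a : A // a ∉ B} × ℕ → Bool) →
      {a : A // a ∉ B} × ℕ → Bool := fun p =>
    if h : p.1 ∈ proj B '' P then
      fib ((f.symm ⟨glue ((fB ⟨p.1, h⟩ : (proj B '' P : Set _)) : ∀ b : B, ℕ → Bool) p.2,
        hmemP _ p.2 (fB ⟨p.1, h⟩).2⟩ : P) : A → ℕ → Bool) else p.2 with htruH'd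
  have htruHcont : ∀ j, ContinuousOn (fun p => truH p j)
      {p : (∀ b : B, ℕ → Bool) × ({a : A // a ∉ B} × ℕ → Bool) | p.1 ∈ proj B '' P} := by
    intro j
    rw [continuousOn_iff_continuous_restrict]
    have heq : restrict {p : (∀ b : B, ℕ → Bool) × ({a : A // a ∉ B} × ℕ → Bool) |
        p.1 ∈ proj B '' P} (fun p => truH p j) = fun q =>
        fib ((f ⟨glue q.1.1 q.1.2, hmemP q.1.1 q.1.2 q.2⟩ : P) : A → ℕ → Bool) j := by
      funext q
      show truH q.1 j = _
      have hq2 : (q : (∀ b : B, ℕ → Bool) × ({a : A // a ∉ B} × ℕ → Bool)).1 ∈ proj B '' P :=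
        q.2
      simp only [htruHd]
      rw [dif_pos hq2]
    rw [show Set.domRestrict _ _ = _ from heq]
    apply (continuous_apply j).comp
    apply hfibc.comp
    apply continuous_subtype_val.comp
    apply f.continuous.comp
    apply Continuous.subtype_mk
    exact hgluec.comp ((continuous_fst.comp continuous_subtype_val).prodMk
      (continuous_snd.comp continuous_subtype_val))
  have htruH'cont : ∀ j, ContinuousOn (fun p => truH' p j)
      {p : (∀ b : B, ℕ → Bool) × ({a : A // a ∉ B} × ℕ → Bool) | p.1 ∈ proj B '' P} := by
    intro j
    rw [continuousOn_iff_continuous_restrict]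
    have heq : restrict {p : (∀ b : B, ℕ → Bool) × ({a : A // a ∉ B} × ℕ → Bool) |
        p.1 ∈ proj B '' P} (fun p => truH' p j) = fun q =>
        fib ((f.symm ⟨glue ((fB ⟨q.1.1, q.2⟩ : (proj B '' P : Set _)) : ∀ b : B, ℕ → Bool) q.1.2,
          hmemP _ q.1.2 (fB ⟨q.1.1, q.2⟩).2⟩ : P) : A → ℕ → Bool) j := by
      funext q
      show truH' q.1 j = _
      have hq2 : (q : (∀ b : B, ℕ → Bool) × ({a : A // a ∉ B} × ℕ → Bool)).1 ∈ proj B '' P :=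
        q.2
      simp only [htruH'd]
      rw [dif_pos hq2]
    rw [show Set.domRestrict _ _ = _ from heq]
    apply (continuous_apply j).comp
    apply hfibc.comp
    apply continuous_subtype_val.comp
    apply f.symm.continuous.comp
    apply Continuous.subtype_mk
    have h1 : Continuous fun q : ↥{p : (∀ b : B, ℕ → Bool) × ({a : A // a ∉ B} × ℕ → Bool) |
        p.1 ∈ proj B '' P} =>
        ((fB ⟨(q : (∀ b : B, ℕ → Bool) × ({a : A // a ∉ B} × ℕ → Bool)).1, q.2⟩ :
          (proj B '' P : Set _)) : ∀ b : B, ℕ → Bool) :=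
      continuous_subtype_val.comp (fB.continuous.comp (Continuous.subtype_mk
        (continuous_fst.comp continuous_subtype_val) _))
    exact hgluec.comp (h1.prodMk (continuous_snd.comp continuous_subtype_val))
  have hHex : ∀ j : {a : A // a ∉ B} × ℕ,
      ∃ g : (∀ b : B, ℕ → Bool) × ({a : A // a ∉ B} × ℕ → Bool) → Bool, Continuous g ∧
        ∀ p ∈ {p : (∀ b : B, ℕ → Bool) × ({a : A // a ∉ B} × ℕ → Bool) |
          p.1 ∈ proj B '' P}, g p = truH p j :=
    fun j => bool_extend hsclosed _ (htruHcont j)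
  have hH'ex : ∀ j : {a : A // a ∉ B} × ℕ,
      ∃ g : (∀ b : B, ℕ → Bool) × ({a : A // a ∉ B} × ℕ → Bool) → Bool, Continuous g ∧
        ∀ p ∈ {p : (∀ b : B, ℕ → Bool) × ({a : A // a ∉ B} × ℕ → Bool) |
          p.1 ∈ proj B '' P}, g p = truH' p j :=
    fun j => bool_extend hsclosed _ (htruH'cont j)
  choose Hco hHcoc hHcoag using hHex
  choose H'co hH'coc hH'coag using hH'ex
  set H : (∀ b : B, ℕ → Bool) × ({a : A // a ∉ B} × ℕ → Bool) →
      {a : A // a ∉ B} × ℕ → Bool := fun p j => Hco j p with hHd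
  set H' : (∀ b : B, ℕ → Bool) × ({a : A // a ∉ B} × ℕ → Bool) →
      {a : A // a ∉ B} × ℕ → Bool := fun p j => H'co j p with hH'd
  have hHc : Continuous H := continuous_pi fun j => hHcoc j
  have hH'c : Continuous H' := continuous_pi fun j => hH'coc j
  have hHag : ∀ p : (∀ b : B, ℕ → Bool) × ({a : A // a ∉ B} × ℕ → Bool),
      p.1 ∈ proj B '' P → H p = truH p := by
    intro p hp
    funext j
    exact hHcoag j p hp
  have hH'ag : ∀ p : (∀ b : B, ℕ → Bool) × ({a : A // a ∉ B} × ℕ → Bool),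
      p.1 ∈ proj B '' P → H' p = truH' p := by
    intro p hp
    funext j
    exact hH'coag j p hp
  -- inverse laws on K
  have hinv1 : ∀ z ∈ proj B '' P, ∀ c, H (z, H' (z, c)) = c := by
    intro z hz c
    have h1 : H' (z, c) = truH' (z, c) := hH'ag (z, c) hz
    have h2 : truH' (z, c) = fib ((f.symm ⟨glue ((fB ⟨z, hz⟩ : (proj B '' P : Set _)) :
        ∀ b : B, ℕ → Bool) c, hmemP _ c (fB ⟨z, hz⟩).2⟩ : P) : A → ℕ → Bool) := by
      simp only [htruH'd]
      rw [dif_pos hz]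
    set q : P := f.symm ⟨glue ((fB ⟨z, hz⟩ : (proj B '' P : Set _)) : ∀ b : B, ℕ → Bool) c,
      hmemP _ c (fB ⟨z, hz⟩).2⟩ with hq
    have hqbase : proj B (q : A → ℕ → Bool) = z := by
      have h3 := hfB q
      have h4 : f q = ⟨glue ((fB ⟨z, hz⟩ : (proj B '' P : Set _)) : ∀ b : B, ℕ → Bool) c,
          hmemP _ c (fB ⟨z, hz⟩).2⟩ := by
        simp only [hq]
        exact f.apply_symm_apply _
      rw [h4] at h3
      have h5 : proj B ((⟨glue ((fB ⟨z, hz⟩ : (proj B '' P : Set _)) : ∀ b : B, ℕ → Bool) c,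
          hmemP _ c (fB ⟨z, hz⟩).2⟩ : P) : A → ℕ → Bool) =
          ((fB ⟨z, hz⟩ : (proj B '' P : Set _)) : ∀ b : B, ℕ → Bool) := hproj_glue _ _
      rw [h5] at h3
      have h6 : fB ⟨proj B (q : A → ℕ → Bool), ⟨q.1, q.2, rfl⟩⟩ = fB ⟨z, hz⟩ :=
        Subtype.ext h3
      have h7 := fB.injective h6
      exact congrArg Subtype.val h7
    rw [h1, h2]
    have h8 : H (z, fib (q : A → ℕ → Bool)) = truH (z, fib (q : A → ℕ → Bool)) := hHag _ hz
    rw [h8]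
    have h9 : truH (z, fib (q : A → ℕ → Bool)) =
        fib ((f ⟨glue z (fib (q : A → ℕ → Bool)), hmemP _ _ hz⟩ : P) : A → ℕ → Bool) := by
      simp only [htruHd]
      rw [dif_pos hz]
    rw [h9]
    have h10 : glue z (fib (q : A → ℕ → Bool)) = (q : A → ℕ → Bool) := by
      rw [← hqbase]
      exact hglue_proj_fib _
    have h11 : (⟨glue z (fib (q : A → ℕ → Bool)), hmemP _ _ hz⟩ : P) = q :=
      Subtype.ext h10
    rw [h11]
    simp only [hq]
    rw [f.apply_symm_apply]
    exact hfib_glue _ _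
  have hinv2 : ∀ z ∈ proj B '' P, ∀ c, H' (z, H (z, c)) = c := by
    intro z hz c
    have h1 : H (z, c) = truH (z, c) := hHag (z, c) hz
    have h2 : truH (z, c) = fib ((f ⟨glue z c, hmemP z c hz⟩ : P) : A → ℕ → Bool) := by
      simp only [htruHd]
      rw [dif_pos hz]
    set p₀ : P := ⟨glue z c, hmemP z c hz⟩ with hp₀
    have hfbase : proj B ((f p₀ : P) : A → ℕ → Bool) =
        ((fB ⟨z, hz⟩ : (proj B '' P : Set _)) : ∀ b : B, ℕ → Bool) := by
      have h3 := hfB p₀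
      have h4 : (⟨proj B (p₀ : A → ℕ → Bool), ⟨p₀.1, p₀.2, rfl⟩⟩ :
          (proj B '' P : Set _)) = ⟨z, hz⟩ := by
        apply Subtype.ext
        show proj B (p₀ : A → ℕ → Bool) = z
        simp only [hp₀]
        exact hproj_glue z c
      rw [h4] at h3
      exact h3.symm
    rw [h1, h2]
    have h8 : H' (z, fib ((f p₀ : P) : A → ℕ → Bool)) =
        truH' (z, fib ((f p₀ : P) : A → ℕ → Bool)) := hH'ag _ hz
    rw [h8]
    have h9 : truH' (z, fib ((f p₀ : P) : A → ℕ → Bool)) =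
        fib ((f.symm ⟨glue ((fB ⟨z, hz⟩ : (proj B '' P : Set _)) : ∀ b : B, ℕ → Bool)
          (fib ((f p₀ : P) : A → ℕ → Bool)),
          hmemP _ _ (fB ⟨z, hz⟩).2⟩ : P) : A → ℕ → Bool) := by
      simp only [htruH'd]
      rw [dif_pos hz]
    rw [h9]
    have h10 : glue ((fB ⟨z, hz⟩ : (proj B '' P : Set _)) : ∀ b : B, ℕ → Bool)
        (fib ((f p₀ : P) : A → ℕ → Bool)) = ((f p₀ : P) : A → ℕ → Bool) := by
      rw [← hfbase]
      exact hglue_proj_fib _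
    have h11 : (⟨glue ((fB ⟨z, hz⟩ : (proj B '' P : Set _)) : ∀ b : B, ℕ → Bool)
        (fib ((f p₀ : P) : A → ℕ → Bool)), hmemP _ _ (fB ⟨z, hz⟩).2⟩ : P) = f p₀ :=
      Subtype.ext h10
    rw [h11, f.symm_apply_apply]
    simp only [hp₀]
    exact hfib_glue _ _
  -- apply the extension machinery
  obtain ⟨U, V, hUc, hVc, hUV, hVU, hKag⟩ := zorn_ext hKclosed H H' hHc hH'c hinv1 hinv2
  refine ⟨⟨⟨fun x => glue (FB (proj B x)) (U (proj B x) (fib x)),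
    fun y => glue (FB.symm (proj B y)) (V (FB.symm (proj B y)) (fib y)), ?_, ?_⟩, ?_, ?_⟩, ?_⟩
  · intro x
    simp only [hproj_glue, hfib_glue, FB.symm_apply_apply, hVU (proj B x) (fib x)]
    exact hglue_proj_fib x
  · intro y
    simp only [hproj_glue, hfib_glue, FB.apply_symm_apply, hUV (FB.symm (proj B y)) (fib y)]
    exact hglue_proj_fib y
  · exact hgluec.comp ((FB.continuous.comp hprojc).prodMk
      (hUc.comp (hprojc.prodMk hfibc)))
  · exact hgluec.comp ((FB.symm.continuous.comp hprojc).prodMk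
      (hVc.comp ((FB.symm.continuous.comp hprojc).prodMk hfibc)))
  · intro p
    show glue (FB (proj B (p : A → ℕ → Bool)))
      (U (proj B (p : A → ℕ → Bool)) (fib (p : A → ℕ → Bool))) = ((f p : P) : A → ℕ → Bool)
    have hz : proj B (p : A → ℕ → Bool) ∈ proj B '' P := ⟨p.1, p.2, rfl⟩
    have hbase : FB (proj B (p : A → ℕ → Bool)) = proj B ((f p : P) : A → ℕ → Bool) := by
      have h1 := hFB ⟨proj B (p : A → ℕ → Bool), hz⟩
      rw [h1]
      exact hfB p
    have hfibeq : U (proj B (p : A → ℕ → Bool)) (fib (p : A → ℕ → Bool)) =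
        fib ((f p : P) : A → ℕ → Bool) := by
      have h1 := (hKag (proj B (p : A → ℕ → Bool)) hz (fib (p : A → ℕ → Bool))).1
      rw [h1]
      have h2 : H (proj B (p : A → ℕ → Bool), fib (p : A → ℕ → Bool)) =
          truH (proj B (p : A → ℕ → Bool), fib (p : A → ℕ → Bool)) := hHag _ hz
      rw [h2]
      simp only [htruHd]
      rw [dif_pos hz]
      have h3 : (⟨glue (proj B (p : A → ℕ → Bool)) (fib (p : A → ℕ → Bool)),
          hmemP _ _ hz⟩ : P) = p := Subtype.ext (hglue_proj_fib _)
      rw [h3]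
    rw [hbase, hfibeq]
    exact hglue_proj_fib _

end Stmt12Aux

/-- Corollary 3.5 of the paper: if `P` is a proper closed subset of the Cantor cube `𝔠^A`
(where `𝔠 = ℕ → Bool` is the Cantor set) of the form `P = P_B × 𝔠^{A∖B}` for a proper
subset `B ⊊ A`, and the self-homeomorphism `f` of `P` projects to a self-homeomorphism
`f_B` of `P_B` that extends over `𝔠^B`, then `f` extends over `𝔠^A`. -/
theorem stmt12 {A : Type u} (P : Set (A → ℕ → Bool)) (hP : IsClosed P)
    (hPproper : P ≠ univ) (f : P ≃ₜ P)
    (B : Set A) (hBproper : B ≠ univ)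
    (hprod : P = proj B ⁻¹' (proj B '' P))
    (fB : (proj B '' P : Set (∀ b : B, ℕ → Bool)) ≃ₜ
      (proj B '' P : Set (∀ b : B, ℕ → Bool)))
    (hfB : ∀ p : P, (fB ⟨proj B p.1, ⟨p.1, p.2, rfl⟩⟩).1 = proj B (f p).1)
    (hext : ∃ FB : (∀ b : B, ℕ → Bool) ≃ₜ (∀ b : B, ℕ → Bool),
      ∀ y : (proj B '' P : Set (∀ b : B, ℕ → Bool)), FB ↑y = ↑(fB y)) :
    ∃ F : (A → ℕ → Bool) ≃ₜ (A → ℕ → Bool), ∀ p : P, F ↑p = ↑(f p) := by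
  obtain ⟨FB, hFB⟩ := hext
  exact Stmt12Aux.main P hP f B hprod fB hfB FB hFB
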